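/- With G^⊖ as above (the doubling of G with each vertex connected to the neighbors of its copy), the assortativity coefficient of G^⊖ equals that of G: both the numerator 4m Σ d_u d_v − (Σ(d_u+d_v))² and the denominator 2m Σ(d_u²+d_v²) − (Σ(d_u+d_v))² of G^⊖ equal exactly 64 times the corresponding quantities for G. In particular, if G is neutral then G^⊖ is neutral. -/

import Mathlib

open Finset

attribute [local instance] Classical.propDecidable

namespace Neutral

/-- Number of edges of `G`. -/
noncomputable def m {V : Type*} [Fintype V] (G : SimpleGraph V) : ℕ :=
  G.edgeFinset.card

/-- `∑_{uv ∈ E} d_u · d_v`, each edge counted once. -/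
noncomputable def dd {V : Type*} [Fintype V] (G : SimpleGraph V) : ℕ :=
  ∑ e ∈ G.edgeFinset,
    Sym2.lift ⟨fun u v => G.degree u * G.degree v, fun _ _ => Nat.mul_comm _ _⟩ e

/-- `∑_{uv ∈ E} (d_u + d_v)`, each edge counted once. -/
noncomputable def ds {V : Type*} [Fintype V] (G : SimpleGraph V) : ℕ :=
  ∑ e ∈ G.edgeFinset,
    Sym2.lift ⟨fun u v => G.degree u + G.degree v, fun _ _ => Nat.add_comm _ _⟩ e

/-- `∑_{uv ∈ E} (d_u² + d_v²)`, each edge counted once. -/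
noncomputable def dsq {V : Type*} [Fintype V] (G : SimpleGraph V) : ℕ :=
  ∑ e ∈ G.edgeFinset,
    Sym2.lift ⟨fun u v => G.degree u ^ 2 + G.degree v ^ 2, fun _ _ => Nat.add_comm _ _⟩ e

/-- A graph is irregular if it is not regular of any degree. -/
def Irregular {V : Type*} [Fintype V] (G : SimpleGraph V) : Prop :=
  ¬ ∃ k, G.IsRegularOfDegree k

end Neutral

open Neutral

namespace Neutral

/-- The doubling `G^⊖` of `G`: two copies of `G`, with each vertex additionally joined
to all neighbours of its twin in the other copy.  Equivalently, `x` and `y` are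
adjacent iff their projections to `V` are adjacent in `G`. -/
def Doubling {V : Type*} (G : SimpleGraph V) : SimpleGraph (V ⊕ V) where
  Adj x y := G.Adj (Sum.elim id id x) (Sum.elim id id y)
  symm := ⟨fun _ _ h => G.adj_symm h⟩
  loopless := ⟨fun x h => G.irrefl h⟩

end Neutral

namespace NeutralAux

open Neutral

variable {V : Type*} [Fintype V]

/-- packing a vertex into the left or right copy -/
def pk (b : Bool) (v : V) : V ⊕ V := bif b then Sum.inl v else Sum.inr v

@[simp] lemma proj_pk (b : Bool) (v : V) : Sum.elim id id (pk b v) = v := by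
  cases b <;> rfl

@[simp] lemma pk_isLeft (b : Bool) (v : V) : (pk b v).isLeft = b := by
  cases b <;> rfl

@[simp] lemma pk_proj (x : V ⊕ V) : pk x.isLeft (Sum.elim id id x) = x := by
  cases x <;> rfl

lemma doubling_adj (G : SimpleGraph V) (x y : V ⊕ V) :
    (Doubling G).Adj x y ↔ G.Adj (Sum.elim id id x) (Sum.elim id id y) := Iff.rfl

/-- Darts of the doubling correspond to darts of `G` together with two side choices. -/
noncomputable def dartEquiv (G : SimpleGraph V) :
    (Doubling G).Dart ≃ G.Dart × Bool × Bool where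
  toFun d := (⟨(Sum.elim id id d.fst, Sum.elim id id d.snd), d.adj⟩,
      d.fst.isLeft, d.snd.isLeft)
  invFun p := ⟨(pk p.2.1 p.1.fst, pk p.2.2 p.1.snd), by
    simpa [doubling_adj] using p.1.adj⟩
  left_inv d := by
    ext <;> simp
  right_inv p := by
    obtain ⟨d, b1, b2⟩ := p
    simp [SimpleGraph.Dart.ext_iff, Prod.ext_iff]

lemma doubling_degree (G : SimpleGraph V) (x : V ⊕ V) :
    (Doubling G).degree x = 2 * G.degree (Sum.elim id id x) := by
  classical
  have hd : ∀ w : V, G.degree w = ∑ v : V, if G.Adj w v then 1 else 0 := by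
    intro w
    rw [← SimpleGraph.card_neighborFinset_eq_degree, SimpleGraph.neighborFinset_eq_filter,
      Finset.card_filter]
  have hD : (Doubling G).degree x
      = ∑ y : V ⊕ V, if G.Adj (Sum.elim id id x) (Sum.elim id id y) then 1 else 0 := by
    rw [← SimpleGraph.card_neighborFinset_eq_degree, SimpleGraph.neighborFinset_eq_filter,
      Finset.card_filter]
    rfl
  rw [hD, Fintype.sum_sum_type, hd]
  simp only [Sum.elim_inl, Sum.elim_inr, id_eq]
  rw [two_mul]; congr 1 <;> exact Finset.sum_congr rfl fun _ _ => by split_ifs <;> simp_all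

/-- a sum over edges, doubled, is a sum over darts -/
lemma sum_edge_eq (G : SimpleGraph V) (f : Sym2 V → ℕ) :
    (∑ d : G.Dart, f d.edge) = 2 * ∑ e ∈ G.edgeFinset, f e := by
  classical
  calc (∑ d : G.Dart, f d.edge)
      = ∑ e ∈ G.edgeFinset, ∑ d ∈ Finset.univ.filter (fun d : G.Dart => d.edge = e),
          f d.edge :=
        (Finset.sum_fiberwise_of_maps_to (fun d _ => by
          simp [SimpleGraph.Dart.edge_mem]) _).symm
    _ = 2 * ∑ e ∈ G.edgeFinset, f e := by
        rw [Finset.mul_sum]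
        refine Finset.sum_congr rfl fun e he => ?_
        have hcard : (Finset.univ.filter (fun d : G.Dart => d.edge = e)).card = 2 :=
          G.dart_edge_fiber_card e (by simpa using he)
        calc (∑ d ∈ Finset.univ.filter (fun d : G.Dart => d.edge = e), f d.edge)
            = ∑ _d ∈ Finset.univ.filter (fun d : G.Dart => d.edge = e), f e := by
              refine Finset.sum_congr rfl fun d hd => ?_
              rw [Finset.mem_filter] at hd
              rw [hd.2]
          _ = 2 * f e := by rw [Finset.sum_const, hcard]; simp

/-- sums over darts of the doubling -/
lemma dart_sum_doubling (G : SimpleGraph V) (g : ℕ → ℕ → ℕ) :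
    (∑ d : (Doubling G).Dart,
        g ((Doubling G).degree d.fst) ((Doubling G).degree d.snd))
      = 4 * ∑ d : G.Dart, g (2 * G.degree d.fst) (2 * G.degree d.snd) := by
  classical
  rw [← Equiv.sum_comp (dartEquiv G).symm
      (fun d => g ((Doubling G).degree d.fst) ((Doubling G).degree d.snd))]
  rw [Fintype.sum_prod_type]
  have : ∀ d : G.Dart, (∑ p : Bool × Bool,
      g ((Doubling G).degree (((dartEquiv G).symm (d, p)).fst))
        ((Doubling G).degree (((dartEquiv G).symm (d, p)).snd)))
      = 4 * g (2 * G.degree d.fst) (2 * G.degree d.snd) := by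
    intro d
    rw [Fintype.sum_prod_type]
    simp only [doubling_degree]
    dsimp only [dartEquiv, Equiv.symm, Equiv.coe_fn_mk]
    simp only [dartEquiv, Equiv.coe_fn_symm_mk, doubling_degree, Fintype.sum_bool, pk, cond_true, cond_false,
      Sum.elim_inl, Sum.elim_inr, id_eq]
    show _ = 4 * g (2 * G.degree d.toProd.1) (2 * G.degree d.toProd.2)
    convert (show ∀ x : ℕ, x + x + (x + x) = 4 * x from fun x => by ring) (g (2 * G.degree d.toProd.1) (2 * G.degree d.toProd.2)) <;> congr
  rw [Finset.sum_congr rfl (fun d _ => this d), ← Finset.mul_sum]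

lemma key (G : SimpleGraph V) :
    m (Doubling G) = 4 * m G ∧ dd (Doubling G) = 16 * dd G ∧
      ds (Doubling G) = 8 * ds G ∧ dsq (Doubling G) = 16 * dsq G := by
  classical
  have hm : 2 * m (Doubling G) = 4 * (2 * m G) := by
    have h1 := (Doubling G).dart_card_eq_twice_card_edges
    have h2 := G.dart_card_eq_twice_card_edges
    have h3 : Fintype.card (Doubling G).Dart = 4 * Fintype.card G.Dart :=
      by rw [Fintype.card_congr (dartEquiv G)]; simp [Fintype.card_prod]; ring
    unfold m
    omega
  have hsum : ∀ (g : ℕ → ℕ → ℕ) (hg : ∀ a b, g a b = g b a),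
      2 * (∑ e ∈ (Doubling G).edgeFinset,
        Sym2.lift ⟨fun u v => g ((Doubling G).degree u) ((Doubling G).degree v),
          fun u v => hg _ _⟩ e)
      = 4 * (2 * ∑ e ∈ G.edgeFinset,
        Sym2.lift ⟨fun u v => g (2 * G.degree u) (2 * G.degree v), fun u v => hg _ _⟩ e) := by
    intro g hg
    rw [← sum_edge_eq, ← sum_edge_eq]
    simp only [SimpleGraph.Dart.edge, Sym2.lift_mk]
    exact dart_sum_doubling G g
  refine ⟨by omega, ?_, ?_, ?_⟩
  · have := hsum (fun a b => a * b) (fun a b => Nat.mul_comm a b)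
    unfold dd
    have h2 : (∑ e ∈ G.edgeFinset,
        Sym2.lift ⟨fun u v => (2 * G.degree u) * (2 * G.degree v),
          fun u v => Nat.mul_comm _ _⟩ e)
        = 4 * ∑ e ∈ G.edgeFinset,
          Sym2.lift ⟨fun u v => G.degree u * G.degree v,
            fun u v => Nat.mul_comm _ _⟩ e := by
      rw [Finset.mul_sum]
      refine Finset.sum_congr rfl fun e _ => ?_
      induction e using Sym2.inductionOn with
      | hf u v => simp [Sym2.lift_mk]; ring
    omega
  · have := hsum (fun a b => a + b) (fun a b => Nat.add_comm a b)
    unfold ds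
    have h2 : (∑ e ∈ G.edgeFinset,
        Sym2.lift ⟨fun u v => (2 * G.degree u) + (2 * G.degree v),
          fun u v => Nat.add_comm _ _⟩ e)
        = 2 * ∑ e ∈ G.edgeFinset,
          Sym2.lift ⟨fun u v => G.degree u + G.degree v,
            fun u v => Nat.add_comm _ _⟩ e := by
      rw [Finset.mul_sum]
      refine Finset.sum_congr rfl fun e _ => ?_
      induction e using Sym2.inductionOn with
      | hf u v => simp [Sym2.lift_mk]; ring
    omega
  · have := hsum (fun a b => a ^ 2 + b ^ 2) (fun a b => Nat.add_comm _ _)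
    unfold dsq
    have h2 : (∑ e ∈ G.edgeFinset,
        Sym2.lift ⟨fun u v => (2 * G.degree u) ^ 2 + (2 * G.degree v) ^ 2,
          fun u v => Nat.add_comm _ _⟩ e)
        = 4 * ∑ e ∈ G.edgeFinset,
          Sym2.lift ⟨fun u v => G.degree u ^ 2 + G.degree v ^ 2,
            fun u v => Nat.add_comm _ _⟩ e := by
      rw [Finset.mul_sum]
      refine Finset.sum_congr rfl fun e _ => ?_
      induction e using Sym2.inductionOn with
      | hf u v => simp [Sym2.lift_mk]; ring
    omega

end NeutralAux

/-- for the doubling `G^⊖` of `G`, both the assortativity numerator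
`4m ∑ d_u d_v − (∑(d_u+d_v))²` and denominator `2m ∑(d_u²+d_v²) − (∑(d_u+d_v))²`
equal `64` times those of `G`; in particular `G` neutral implies `G^⊖` neutral. -/
theorem stmt_13 {V : Type*} [Fintype V] (G : SimpleGraph V) :
    4 * (m (Doubling G) : ℤ) * (dd (Doubling G) : ℤ) - (ds (Doubling G) : ℤ) ^ 2 =
        64 * (4 * (m G : ℤ) * (dd G : ℤ) - (ds G : ℤ) ^ 2) ∧
      2 * (m (Doubling G) : ℤ) * (dsq (Doubling G) : ℤ) - (ds (Doubling G) : ℤ) ^ 2 =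
        64 * (2 * (m G : ℤ) * (dsq G : ℤ) - (ds G : ℤ) ^ 2) ∧
      (4 * m G * dd G = (ds G) ^ 2 →
        4 * m (Doubling G) * dd (Doubling G) = (ds (Doubling G)) ^ 2) := by
  obtain ⟨hm, hdd, hds, hdsq⟩ := NeutralAux.key G
  refine ⟨?_, ?_, ?_⟩
  · rw [hm, hdd, hds]; push_cast; ring
  · rw [hm, hdsq, hds]; push_cast; ring
  · intro h; rw [hm, hdd, hds]; ring_nf; ring_nf at h; nlinarith [h]
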